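/- Let x be a solution of (E) and let M ≥ τ be such that x(t) ≥ 0 for all t ≥ M. Then for every index k with t_k ≥ M and every t ≥ t_k, x(t) ≤ x(t_k) + r(t_k)·x′(t_k)·∫_{t_k}^{t} ds/r(s). In particular, if additionally ∫_τ^∞ ds/r(s) = ∞ and x′(t_k) < 0, then x(t) → −∞ as t → ∞, a contradiction with x ≥ 0. -/

import Mathlib

open MeasureTheory Set Filter

theorem stmt5
    (t ζ : ℕ → ℝ) (ht_mono : StrictMono t)
    (ht_top : Tendsto t atTop atTop)
    (hζ : ∀ k : ℕ, ζ k ∈ Icc (t k) (t (k+1)))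
    (r : ℝ → ℝ) (hr_cont : ContinuousOn r (Ici (t 0)))
    (hr_pos : ∀ s ∈ Ici (t 0), 0 < r s)
    (f : ℝ → ℝ → ℝ)
    (hf_cont : ContinuousOn (fun q : ℝ × ℝ => f q.1 q.2) ((Ici (t 0)) ×ˢ (univ : Set ℝ)))
    (hf_sign : ∀ s ∈ Ici (t 0), ∀ y : ℝ, y ≠ 0 → 0 < y * f s y)
    (x x' : ℝ → ℝ)
    (hx_deriv : ∀ s ∈ Ici (t 0), HasDerivAt x (x' s) s)
    (hx'_cont : ContinuousOn x' (Ici (t 0)))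
    (hE : ∀ k : ℕ, ∀ s ∈ Ioo (t k) (t (k+1)),
      HasDerivAt (fun u => r u * x' u) (-(f s (x (ζ k)))) s)
    (M : ℝ) (hM : t 0 ≤ M) (hxM : ∀ s : ℝ, M ≤ s → 0 ≤ x s) :
    (∀ k : ℕ, M ≤ t k → ∀ s : ℝ, t k ≤ s →
      x s ≤ x (t k) + r (t k) * x' (t k) * ∫ u in t k..s, 1 / r u) ∧
    ((∫⁻ s in Ioi (t 0), ENNReal.ofReal (1 / r s) = ⊤) →
      ∀ k : ℕ, M ≤ t k → ¬ x' (t k) < 0) := by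
  classical
  have htm := ht_mono.monotone
  -- f is nonnegative at nonnegative second argument
  have hf_nonneg : ∀ s ∈ Ici (t 0), ∀ y : ℝ, 0 ≤ y → 0 ≤ f s y := by
    intro s hs y hy
    rcases eq_or_lt_of_le hy with h0 | h0
    · have hc : Continuous (fun z : ℝ => f s z) :=
        continuousOn_univ.mp
          (hf_cont.comp ((continuous_const.prodMk continuous_id).continuousOn)
            (fun z _ => ⟨hs, mem_univ z⟩))
      have htend : Tendsto (fun z => f s z) (nhdsWithin 0 (Ioi (0:ℝ))) (nhds (f s 0)) :=
        (hc.tendsto 0).mono_left nhdsWithin_le_nhds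
      have h00 : 0 ≤ f s 0 := by
        refine ge_of_tendsto htend ?_
        filter_upwards [self_mem_nhdsWithin] with z hz
        have hz' : (0:ℝ) < z := hz
        have := hf_sign s hs z (ne_of_gt hz')
        nlinarith
      rw [← h0]; exact h00
    · have := hf_sign s hs y (ne_of_gt h0)
      nlinarith
  -- within one interval, r*x' is nonincreasing
  have key : ∀ j : ℕ, M ≤ t j → ∀ a b : ℝ, t j ≤ a → a ≤ b → b ≤ t (j+1) →
      r b * x' b ≤ r a * x' a := by
    intro j hj a b ha hab hb
    have hxζ : 0 ≤ x (ζ j) := hxM _ (le_trans hj (hζ j).1)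
    have hsub : Icc a b ⊆ Ici (t 0) := fun u hu => le_trans ((hM.trans hj).trans ha) hu.1
    have hFcont : ContinuousOn (fun s => -(f s (x (ζ j)))) (Icc a b) := by
      have h1 : ContinuousOn (fun s : ℝ => f s (x (ζ j))) (Icc a b) :=
        hf_cont.comp ((continuous_id.prodMk continuous_const).continuousOn)
          (fun u hu => ⟨hsub hu, mem_univ _⟩)
      exact h1.neg
    have hFint : IntervalIntegrable (fun s => -(f s (x (ζ j)))) volume a b := by
      apply ContinuousOn.intervalIntegrable
      rwa [uIcc_of_le hab]
    have hgcont : ContinuousOn (fun u => r u * x' u) (Icc a b) :=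
      (hr_cont.mono hsub).mul (hx'_cont.mono hsub)
    have hderiv : ∀ s ∈ Ioo a b, HasDerivAt (fun u => r u * x' u) (-(f s (x (ζ j)))) s :=
      fun s hs => hE j s ⟨lt_of_le_of_lt ha hs.1, lt_of_lt_of_le hs.2 hb⟩
    have hFTC := intervalIntegral.integral_eq_sub_of_hasDerivAt_of_le hab hgcont hderiv hFint
    have hle : (∫ s in a..b, -(f s (x (ζ j)))) ≤ ∫ s in a..b, (0:ℝ) := by
      apply intervalIntegral.integral_mono_on hab hFint intervalIntegrable_const
      intro u hu
      have := hf_nonneg u (hsub hu) _ hxζ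
      linarith
    simp only [intervalIntegral.integral_zero] at hle
    linarith
  -- r*x' nonincreasing along the grid
  have grid : ∀ k : ℕ, M ≤ t k → ∀ j : ℕ, k ≤ j →
      r (t j) * x' (t j) ≤ r (t k) * x' (t k) := by
    intro k hk j hkj
    induction j with
    | zero =>
      have hk0 : k = 0 := Nat.le_zero.mp hkj
      subst hk0; exact le_refl _
    | succ j ih =>
      rcases Nat.lt_or_ge k (j+1) with h | h
      · have hkj' : k ≤ j := Nat.lt_succ_iff.mp h
        have h1 := ih hkj'
        have h2 := key j (hk.trans (htm hkj')) (t j) (t (j+1)) le_rfl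
          (htm (Nat.le_succ j)) le_rfl
        linarith
      · have : k = j + 1 := le_antisymm hkj h
        subst this; exact le_refl _
  -- global: r*x' nonincreasing on [t k, ∞)
  have hglob : ∀ k : ℕ, M ≤ t k → ∀ u : ℝ, t k ≤ u →
      r u * x' u ≤ r (t k) * x' (t k) := by
    intro k hk u hu
    have hex : ∃ n, u < t n := (ht_top.eventually_gt_atTop u).exists
    have hNlt : u < t (Nat.find hex) := Nat.find_spec hex
    have hkN : k < Nat.find hex := by
      by_contra h
      push_neg at h
      exact absurd ((htm h).trans hu) (not_le.mpr hNlt)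
    obtain ⟨j, hjN⟩ : ∃ j, Nat.find hex = j + 1 :=
      ⟨Nat.find hex - 1, by omega⟩
    have hj1 : t j ≤ u := by
      by_contra h
      push_neg at h
      exact Nat.find_min hex (by omega) h
    have hkj : k ≤ j := by omega
    have h1 := key j (hk.trans (htm hkj)) (t j) u le_rfl hj1 (by rw [← hjN]; exact hNlt.le)
    have h2 := grid k hk j hkj
    linarith
  -- main inequality
  have main : ∀ k : ℕ, M ≤ t k → ∀ s : ℝ, t k ≤ s →
      x s ≤ x (t k) + r (t k) * x' (t k) * ∫ u in t k..s, 1 / r u := by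
    intro k hk s hs
    have hsub : Icc (t k) s ⊆ Ici (t 0) := fun u hu => ((hM.trans hk)).trans hu.1
    have hx'int : IntervalIntegrable x' volume (t k) s := by
      apply ContinuousOn.intervalIntegrable
      rw [uIcc_of_le hs]
      exact hx'_cont.mono hsub
    have hftc : ∫ u in t k..s, x' u = x s - x (t k) :=
      intervalIntegral.integral_eq_sub_of_hasDerivAt
        (fun u hu => hx_deriv u (hsub (by rwa [uIcc_of_le hs] at hu))) hx'int
    have hrint : IntervalIntegrable (fun u => r (t k) * x' (t k) * (1 / r u)) volume (t k) s := by
      apply ContinuousOn.intervalIntegrable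
      rw [uIcc_of_le hs]
      exact continuousOn_const.mul
        (continuousOn_const.div (hr_cont.mono hsub) (fun u hu => (hr_pos u (hsub hu)).ne'))
    have hmono : ∫ u in t k..s, x' u ≤ ∫ u in t k..s, r (t k) * x' (t k) * (1 / r u) := by
      apply intervalIntegral.integral_mono_on hs hx'int hrint
      intro u hu
      have hru : 0 < r u := hr_pos u (hsub hu)
      have hgu := hglob k hk u hu.1
      rw [mul_one_div, le_div_iff₀ hru]
      nlinarith
    rw [intervalIntegral.integral_const_mul] at hmono
    linarith [hftc ▸ hmono]
  refine ⟨main, ?_⟩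
  intro hint k hk hx'neg
  have hrk : 0 < r (t k) := hr_pos _ (hM.trans hk)
  set C := r (t k) * x' (t k) with hCdef
  have hCneg : C < 0 := mul_neg_of_pos_of_neg hrk hx'neg
  set R : ℝ → ℝ := fun s => 1 / r (max s (t 0)) with hRdef
  have hRcont : Continuous R := by
    have h1 : Continuous (fun s : ℝ => r (max s (t 0))) :=
      hr_cont.comp_continuous (continuous_id.max continuous_const)
        (fun s => mem_Ici.mpr (le_max_right _ _))
    exact continuous_const.div h1 (fun s => (hr_pos _ (mem_Ici.mpr (le_max_right _ _))).ne')
  have hRnn : ∀ s, 0 ≤ R s := fun s =>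
    le_of_lt (one_div_pos.mpr (hr_pos _ (mem_Ici.mpr (le_max_right _ _))))
  set ν : Measure ℝ := volume.withDensity (fun s => ENNReal.ofReal (R s)) with hνdef
  have hνapp : ∀ A : Set ℝ, MeasurableSet A → ν A = ∫⁻ s in A, ENNReal.ofReal (R s) :=
    fun A hA => withDensity_apply _ hA
  have hνIoi : ν (Ioi (t 0)) = ⊤ := by
    rw [hνapp _ measurableSet_Ioi, ← hint]
    apply setLIntegral_congr_fun measurableSet_Ioi
    intro u hu
    rw [hRdef]
    simp only [max_eq_left (le_of_lt (mem_Ioi.mp hu))]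
  have hνIoc_fin : ν (Ioc (t 0) (t k)) < ⊤ := by
    obtain ⟨z, _, hz⟩ := (isCompact_Icc (a := t 0) (b := t k)).exists_isMaxOn
      ⟨t 0, left_mem_Icc.mpr (hM.trans hk)⟩ hRcont.continuousOn
    rw [hνapp _ measurableSet_Ioc]
    calc ∫⁻ s in Ioc (t 0) (t k), ENNReal.ofReal (R s)
        ≤ ∫⁻ _ in Ioc (t 0) (t k), ENNReal.ofReal (R z) := by
          apply setLIntegral_mono measurable_const
          intro u hu
          exact ENNReal.ofReal_le_ofReal (hz (Ioc_subset_Icc_self hu))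
      _ = ENNReal.ofReal (R z) * volume (Ioc (t 0) (t k)) := by
          rw [lintegral_const, Measure.restrict_apply_univ]
      _ < ⊤ := ENNReal.mul_lt_top ENNReal.ofReal_lt_top measure_Ioc_lt_top
  have hνIoik : ν (Ioi (t k)) = ⊤ := by
    by_contra h
    have hsplit : ν (Ioi (t 0)) ≤ ν (Ioc (t 0) (t k)) + ν (Ioi (t k)) := by
      refine (measure_mono ?_).trans (measure_union_le _ _)
      intro u hu
      rcases le_or_gt u (t k) with h' | h'
      · exact Or.inl ⟨hu, h'⟩
      · exact Or.inr h'
    rw [hνIoi] at hsplit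
    have hfin : ν (Ioc (t 0) (t k)) + ν (Ioi (t k)) < ⊤ :=
      ENNReal.add_lt_top.mpr ⟨hνIoc_fin, Ne.lt_top h⟩
    exact lt_irrefl _ (lt_of_le_of_lt hsplit hfin)
  have hUnion : Ioi (t k) = ⋃ n : ℕ, Ioc (t k) (t k + n) := by
    ext u
    simp only [mem_Ioi, mem_iUnion, mem_Ioc]
    constructor
    · intro h
      obtain ⟨n, hn⟩ := exists_nat_ge (u - t k)
      exact ⟨n, h, by linarith⟩
    · rintro ⟨n, h, _⟩; exact h
  have hdir : Directed (· ⊆ ·) (fun n : ℕ => Ioc (t k) (t k + n)) := by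
    apply Monotone.directed_le
    intro m n hmn
    exact Ioc_subset_Ioc_right (by exact_mod_cast add_le_add_right (Nat.cast_le.mpr hmn) _)
  have hsup : (⨆ n : ℕ, ν (Ioc (t k) (t k + n))) = ⊤ := by
    rw [← hdir.measure_iUnion, ← hUnion, hνIoik]
  have hxk : 0 ≤ x (t k) := hxM _ hk
  set B := x (t k) / (-C) with hBdef
  have hBnn : 0 ≤ B := div_nonneg hxk (by linarith)
  have hlt : ENNReal.ofReal B < ⨆ n : ℕ, ν (Ioc (t k) (t k + n)) := by
    rw [hsup]; exact ENNReal.ofReal_lt_top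
  obtain ⟨n, hn⟩ := lt_iSup_iff.mp hlt
  have hle : t k ≤ t k + n := le_add_of_nonneg_right (Nat.cast_nonneg n)
  have hRint : IntegrableOn R (Ioc (t k) (t k + n)) volume :=
    (hRcont.integrableOn_Icc).mono_set Ioc_subset_Icc_self
  have hνIoc : ν (Ioc (t k) (t k + n)) = ENNReal.ofReal (∫ u in Ioc (t k) (t k + n), R u) := by
    rw [hνapp _ measurableSet_Ioc, ← ofReal_integral_eq_lintegral_ofReal hRint (ae_of_all _ hRnn)]
  have hIeq : ∫ u in Ioc (t k) (t k + n), R u = ∫ u in t k..(t k + n), 1 / r u := by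
    rw [intervalIntegral.integral_of_le hle]
    apply setIntegral_congr_fun measurableSet_Ioc
    intro u hu
    rw [hRdef]
    simp only [max_eq_left ((hM.trans hk).trans hu.1.le)]
  rw [hνIoc, hIeq] at hn
  have hBI : B < ∫ u in t k..(t k + n), 1 / r u :=
    (ENNReal.ofReal_lt_ofReal_iff_of_nonneg hBnn).mp hn
  have hmain := main k hk (t k + n) hle
  have hC0 : C ≠ 0 := ne_of_lt hCneg
  have h2 : C * B = - x (t k) := by
    have hB' : B * (-C) = x (t k) := div_mul_cancel₀ _ (neg_ne_zero.mpr hC0)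
    linear_combination -hB'
  have h1 : C * (∫ u in t k..(t k + n), 1 / r u) < C * B :=
    mul_lt_mul_of_neg_left hBI hCneg
  have hxs : 0 ≤ x (t k + n) := hxM _ (hk.trans hle)
  rw [← hCdef] at hmain
  linarith
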